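/- Let a, b ≥ 0 and let q_a, q_b be the Poisson quantile transforms. Then the comonotonic Poisson pair (q_a(U), q_b(U)), with U uniform on (0,1), satisfies ∫ q_a(u)·q_b(u) dμ(u) − (∫ q_a(u) dμ(u))·(∫ q_b(u) dμ(u)) = Σ_{m=0}^{∞} Σ_{n=0}^{∞} min{Ḡ_a(m), Ḡ_b(n)} − a·b; that is, the covariance of a comonotonic pair of Poisson random variables with means a and b equals Σ_{m,n ≥ 0} min{Ḡ_a(m), Ḡ_b(n)} − ab. -/

import Mathlib

open MeasureTheory

/-- The uniform probability measure on the open interval (0,1):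
Lebesgue measure restricted to (0,1). -/
noncomputable def unif : Measure ℝ := volume.restrict (Set.Ioo (0 : ℝ) 1)

/-- The quantile transform of a cdf `F` on ℕ: `q_F(u) = min {n : u ≤ F n}`. -/
noncomputable def qt (F : ℕ → ℝ) (u : ℝ) : ℕ := sInf {n : ℕ | u ≤ F n}

/-- The Poisson(λ) cumulative distribution function on ℕ. -/
noncomputable def poisCdf (l : ℝ) (n : ℕ) : ℝ :=
  ∑ k ∈ Finset.range (n + 1), Real.exp (-l) * l ^ k / (Nat.factorial k)

/-- The Poisson(λ) probability mass function on ℕ. -/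
noncomputable def poisPmf (l : ℝ) (n : ℕ) : ℝ :=
  Real.exp (-l) * l ^ n / (Nat.factorial n)

/-- `F(n-1)` with the convention `F(-1) = 0`. -/
noncomputable def cdfm1 (F : ℕ → ℝ) (n : ℕ) : ℝ := if n = 0 then 0 else F (n - 1)

section aux

open ENNReal Filter Set

variable {l : ℝ}

lemma pmf_nonneg (hl : 0 ≤ l) (n : ℕ) : 0 ≤ poisPmf l n := by
  unfold poisPmf
  positivity

lemma pmf_hasSum (hl : 0 ≤ l) : HasSum (poisPmf l) 1 := by
  have hs : Summable (fun n : ℕ => l ^ n / n.factorial) := Real.summable_pow_div_factorial l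
  have ht : ∑' n : ℕ, l ^ n / (n.factorial : ℝ) = Real.exp l := by
    rw [Real.exp_eq_exp_ℝ, NormedSpace.exp_eq_tsum_div]
  have h1 : HasSum (fun n : ℕ => l ^ n / (n.factorial : ℝ)) (Real.exp l) := ht ▸ hs.hasSum
  have h2 := h1.mul_left (Real.exp (-l))
  have : Real.exp (-l) * Real.exp l = 1 := by
    rw [← Real.exp_add]; simp
  rw [this] at h2
  have e : poisPmf l = fun i : ℕ => Real.exp (-l) * (l ^ i / (i.factorial : ℝ)) := by
    funext n
    unfold poisPmf
    ring
  rw [e]; exact h2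

lemma cdf_eq (l : ℝ) (n : ℕ) : poisCdf l n = ∑ k ∈ Finset.range (n + 1), poisPmf l k := rfl

lemma cdf_mono (hl : 0 ≤ l) : Monotone (poisCdf l) := by
  intro m n hmn
  rw [cdf_eq, cdf_eq]
  exact Finset.sum_le_sum_of_subset_of_nonneg
    (Finset.range_subset_range.2 (by omega)) (fun k _ _ => pmf_nonneg hl k)

lemma cdf_nonneg (hl : 0 ≤ l) (n : ℕ) : 0 ≤ poisCdf l n := by
  rw [cdf_eq]; exact Finset.sum_nonneg fun k _ => pmf_nonneg hl k

lemma cdf_le_one (hl : 0 ≤ l) (n : ℕ) : poisCdf l n ≤ 1 := by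
  rw [cdf_eq]
  exact sum_le_hasSum _ (fun k _ => pmf_nonneg hl k) (pmf_hasSum hl)

lemma tendsto_cdf (hl : 0 ≤ l) : Tendsto (poisCdf l) atTop (nhds 1) := by
  have h := (pmf_hasSum hl).tendsto_sum_nat
  have := h.comp (tendsto_add_atTop_nat 1)
  convert this using 1
  rfl

lemma qt_lt_iff (hl : 0 ≤ l) {u : ℝ} (hu : u < 1) (n : ℕ) :
    poisCdf l n < u ↔ n < qt (poisCdf l) u := by
  have hne : {m : ℕ | u ≤ poisCdf l m}.Nonempty := by
    obtain ⟨m, hm⟩ := ((tendsto_cdf hl).eventually (eventually_gt_nhds hu)).exists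
    exact ⟨m, hm.le⟩
  constructor
  · intro h
    by_contra hc
    push_neg at hc
    have hmem := Nat.sInf_mem hne
    have : u ≤ poisCdf l n := le_trans hmem (cdf_mono hl hc)
    linarith
  · intro h
    have := Nat.notMem_of_lt_sInf h
    simpa using this

lemma tsum_ite_lt (N : ℕ) (c : ℝ≥0∞) :
    ∑' m : ℕ, (if m < N then c else 0) = N * c := by
  rw [tsum_eq_sum (s := Finset.range N) (fun m hm => by
    simp [Finset.mem_range] at hm; simp [hm])]
  simp [Finset.sum_ite_of_true, Finset.mem_range]

lemma qt_cast (hl : 0 ≤ l) {u : ℝ} (hu : u < 1) :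
    (qt (poisCdf l) u : ℝ≥0∞)
      = ∑' m : ℕ, (Set.Ioi (poisCdf l m)).indicator (1 : ℝ → ℝ≥0∞) u := by
  have : ∀ m : ℕ, (Set.Ioi (poisCdf l m)).indicator (1 : ℝ → ℝ≥0∞) u
      = if m < qt (poisCdf l) u then 1 else 0 := by
    intro m
    rw [Set.indicator_apply]
    simp only [Set.mem_Ioi, Pi.one_apply]
    exact if_congr (qt_lt_iff hl hu m) rfl rfl
  rw [tsum_congr this, tsum_ite_lt]
  simp

lemma meas_qt (hl : 0 ≤ l) : Measurable (qt (poisCdf l)) := by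
  have hA : ∀ n : ℕ, {u : ℝ | qt (poisCdf l) u ≤ n}
      = Set.Iic (poisCdf l n) ∪ ⋂ m : ℕ, Set.Ioi (poisCdf l m) := by
    intro n
    ext u
    simp only [Set.mem_setOf_eq, Set.mem_union, Set.mem_Iic, Set.mem_iInter, Set.mem_Ioi]
    constructor
    · intro h
      by_cases hN : ∀ m, poisCdf l m < u
      · exact Or.inr hN
      · push_neg at hN
        obtain ⟨m, hm⟩ := hN
        have hne : {k : ℕ | u ≤ poisCdf l k}.Nonempty := ⟨m, hm⟩
        have hmem := Nat.sInf_mem hne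
        exact Or.inl (le_trans hmem (cdf_mono hl h))
    · rintro (h | h)
      · exact Nat.sInf_le h
      · have : {k : ℕ | u ≤ poisCdf l k} = ∅ := by
          ext k; simp only [Set.mem_setOf_eq, Set.mem_empty_iff_false, iff_false, not_le]
          exact h k
        simp [qt, this]
  have hAm : ∀ n : ℕ, MeasurableSet {u : ℝ | qt (poisCdf l) u ≤ n} := by
    intro n
    rw [hA n]
    exact (measurableSet_Iic).union (MeasurableSet.iInter fun m => measurableSet_Ioi)
  apply measurable_to_countable'
  intro n
  match n with
  | 0 =>
    have : qt (poisCdf l) ⁻¹' {0} = {u : ℝ | qt (poisCdf l) u ≤ 0} := by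
      ext u; simp [Nat.le_zero]
    rw [this]; exact hAm 0
  | (n + 1) =>
    have : qt (poisCdf l) ⁻¹' {n + 1}
        = {u : ℝ | qt (poisCdf l) u ≤ n + 1} \ {u : ℝ | qt (poisCdf l) u ≤ n} := by
      ext u; simp only [Set.mem_preimage, Set.mem_singleton_iff, Set.mem_diff,
        Set.mem_setOf_eq]
      omega
    rw [this]; exact (hAm (n + 1)).diff (hAm n)

lemma unif_Ioi {c : ℝ} (hc : 0 ≤ c) : unif (Set.Ioi c) = ENNReal.ofReal (1 - c) := by
  unfold unif
  rw [Measure.restrict_apply measurableSet_Ioi]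
  have : Set.Ioi c ∩ Set.Ioo (0 : ℝ) 1 = Set.Ioo c 1 := by
    ext x
    simp only [Set.mem_inter_iff, Set.mem_Ioi, Set.mem_Ioo]
    constructor
    · rintro ⟨h1, _, h3⟩; exact ⟨h1, h3⟩
    · rintro ⟨h1, h2⟩; exact ⟨h1, lt_of_le_of_lt hc h1, h2⟩
  rw [this, Real.volume_Ioo]

lemma lintegral_qt (hl : 0 ≤ l) :
    ∫⁻ u, (qt (poisCdf l) u : ℝ≥0∞) ∂unif
      = ∑' m : ℕ, ENNReal.ofReal (1 - poisCdf l m) := by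
  have hae : ∀ᵐ u ∂unif, (qt (poisCdf l) u : ℝ≥0∞)
      = ∑' m : ℕ, (Set.Ioi (poisCdf l m)).indicator (1 : ℝ → ℝ≥0∞) u := by
    refine (ae_restrict_mem measurableSet_Ioo).mono fun u hu => ?_
    exact qt_cast hl hu.2
  rw [lintegral_congr_ae hae,
    lintegral_tsum fun m => (measurable_one.indicator measurableSet_Ioi).aemeasurable]
  congr 1
  ext m
  rw [lintegral_indicator_one measurableSet_Ioi, unif_Ioi (cdf_nonneg hl m)]

lemma summable_pmf (hl : 0 ≤ l) : Summable (poisPmf l) := (pmf_hasSum hl).summable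

lemma tail_eq (hl : 0 ≤ l) (n : ℕ) :
    ∑' k : ℕ, poisPmf l (k + (n + 1)) = 1 - poisCdf l n := by
  have h := Summable.sum_add_tsum_nat_add (f := poisPmf l) (n + 1) (summable_pmf hl)
  rw [(pmf_hasSum hl).tsum_eq] at h
  rw [cdf_eq]
  linarith

lemma shift_eq (l : ℝ) :
    (fun j : ℕ => ((j + 1 : ℕ) : ℝ) * poisPmf l (j + 1)) = fun j => l * poisPmf l j := by
  funext j
  unfold poisPmf
  have hf : ((j + 1).factorial : ℝ) = (j + 1) * j.factorial := by
    rw [Nat.factorial_succ]; push_cast; ring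
  have hj : ((j : ℝ) + 1) ≠ 0 := by positivity
  have hfac : (j.factorial : ℝ) ≠ 0 := Nat.cast_ne_zero.2 (Nat.factorial_ne_zero j)
  rw [pow_succ]
  push_cast
  rw [hf]
  field_simp

lemma summable_mean (hl : 0 ≤ l) : Summable (fun j : ℕ => (j : ℝ) * poisPmf l j) := by
  rw [← summable_nat_add_iff 1]
  have h : (fun j : ℕ => (((j + 1 : ℕ)) : ℝ) * poisPmf l (j + 1)) = fun j => l * poisPmf l j :=
    shift_eq l
  refine ((summable_pmf hl).mul_left l).congr fun j => ?_
  exact (congrFun h j).symm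

lemma tsum_mean (hl : 0 ≤ l) : ∑' j : ℕ, (j : ℝ) * poisPmf l j = l := by
  rw [Summable.tsum_eq_zero_add (summable_mean hl)]
  have hc : ∑' j : ℕ, ((j + 1 : ℕ) : ℝ) * poisPmf l (j + 1) = ∑' j : ℕ, l * poisPmf l j :=
    tsum_congr fun j => congrFun (shift_eq l) j
  rw [hc, tsum_mul_left, (pmf_hasSum hl).tsum_eq]
  norm_num

lemma tsum_tail_ennreal (hl : 0 ≤ l) :
    ∑' n : ℕ, ENNReal.ofReal (1 - poisCdf l n) = ENNReal.ofReal l := by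
  have hstep : ∀ n : ℕ, ENNReal.ofReal (1 - poisCdf l n)
      = ∑' k : ℕ, ENNReal.ofReal (poisPmf l (k + (n + 1))) := by
    intro n
    rw [← tail_eq hl n]
    exact ENNReal.ofReal_tsum_of_nonneg (fun k => pmf_nonneg hl _)
      ((summable_nat_add_iff (n + 1)).2 (summable_pmf hl))
  rw [tsum_congr hstep]
  set g : ℕ → ℝ≥0∞ := fun j => ENNReal.ofReal (poisPmf l j) with hg
  have hinner : ∀ n : ℕ, ∑' k : ℕ, g (k + (n + 1))
      = ∑' j : ℕ, (if n + 1 ≤ j then g j else 0) := by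
    intro n
    have hinj : Function.Injective (fun k : ℕ => k + (n + 1)) := add_left_injective (n + 1)
    have := hinj.tsum_eq (f := fun j => if n + 1 ≤ j then g j else 0) ?_
    · rw [← this]
      refine tsum_congr fun k => ?_
      simp
    · intro j hj
      simp only [Function.mem_support, ne_eq, ite_eq_right_iff, not_forall] at hj
      obtain ⟨hle, -⟩ := hj
      refine ⟨j - (n + 1), ?_⟩
      show j - (n + 1) + (n + 1) = j
      omega
  rw [tsum_congr hinner, ENNReal.tsum_comm]
  have hrow : ∀ j : ℕ, ∑' n : ℕ, (if n + 1 ≤ j then g j else 0) = (j : ℝ≥0∞) * g j := by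
    intro j
    rw [← tsum_ite_lt j (g j)]
    refine tsum_congr fun n => ?_
    congr 1
  rw [tsum_congr hrow]
  have : ∀ j : ℕ, (j : ℝ≥0∞) * g j = ENNReal.ofReal ((j : ℝ) * poisPmf l j) := by
    intro j
    rw [hg, ENNReal.ofReal_mul (by positivity)]
    simp
  rw [tsum_congr this, ← ENNReal.ofReal_tsum_of_nonneg
    (fun j => mul_nonneg (by positivity) (pmf_nonneg hl j)) (summable_mean hl),
    tsum_mean hl]

lemma integral_qt (hl : 0 ≤ l) : ∫ u, (qt (poisCdf l) u : ℝ) ∂unif = l := by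
  have hm : AEStronglyMeasurable (fun u => (qt (poisCdf l) u : ℝ)) unif :=
    (measurable_from_nat.comp (meas_qt hl)).aestronglyMeasurable
  rw [integral_eq_lintegral_of_nonneg_ae
    (Filter.Eventually.of_forall fun u => by positivity) hm]
  have : ∀ u : ℝ, ENNReal.ofReal ((qt (poisCdf l) u : ℝ)) = (qt (poisCdf l) u : ℝ≥0∞) := by
    intro u; simp
  simp_rw [this]
  rw [lintegral_qt hl, tsum_tail_ennreal hl, ENNReal.toReal_ofReal hl]

end aux

open ENNReal Filter Set

lemma lintegral_qt_mul {a b : ℝ} (ha : 0 ≤ a) (hb : 0 ≤ b) :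
    ∫⁻ u, (qt (poisCdf a) u : ℝ≥0∞) * (qt (poisCdf b) u : ℝ≥0∞) ∂unif
      = ∑' p : ℕ × ℕ,
          ENNReal.ofReal (1 - max (poisCdf a p.1) (poisCdf b p.2)) := by
  have hae : ∀ᵐ u ∂unif, (qt (poisCdf a) u : ℝ≥0∞) * (qt (poisCdf b) u : ℝ≥0∞)
      = ∑' p : ℕ × ℕ,
          (Set.Ioi (max (poisCdf a p.1) (poisCdf b p.2))).indicator (1 : ℝ → ℝ≥0∞) u := by
    refine (ae_restrict_mem measurableSet_Ioo).mono fun u hu => ?_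
    rw [qt_cast ha hu.2, qt_cast hb hu.2, ← ENNReal.tsum_mul_right]
    rw [ENNReal.tsum_prod']
    refine tsum_congr fun m => ?_
    rw [← ENNReal.tsum_mul_left]
    refine tsum_congr fun n => ?_
    simp only [Set.indicator_apply, Set.mem_Ioi, Pi.one_apply, max_lt_iff]
    by_cases h1 : poisCdf a m < u <;> by_cases h2 : poisCdf b n < u <;>
      simp [h1, h2]
  rw [lintegral_congr_ae hae,
    lintegral_tsum fun p => (measurable_one.indicator measurableSet_Ioi).aemeasurable]
  refine tsum_congr fun p => ?_
  rw [lintegral_indicator_one measurableSet_Ioi,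
    unif_Ioi (le_trans (cdf_nonneg ha p.1) (le_max_left _ _))]

/-- The covariance of a comonotonic pair of Poisson random variables with means `a` and `b`
equals `Σ_{m,n ≥ 0} min{Ḡ_a(m), Ḡ_b(n)} − a·b`. -/
theorem comonotonic_poisson_cov (a b : ℝ) (ha : 0 ≤ a) (hb : 0 ≤ b) :
    ∫ u, (qt (poisCdf a) u : ℝ) * (qt (poisCdf b) u : ℝ) ∂unif
        - (∫ u, (qt (poisCdf a) u : ℝ) ∂unif) * (∫ u, (qt (poisCdf b) u : ℝ) ∂unif)
      = (∑' p : ℕ × ℕ, min (1 - poisCdf a p.1) (1 - poisCdf b p.2)) - a * b := by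
  have hmeas : AEStronglyMeasurable
      (fun u => (qt (poisCdf a) u : ℝ) * (qt (poisCdf b) u : ℝ)) unif :=
    ((measurable_from_nat.comp (meas_qt ha)).mul
      (measurable_from_nat.comp (meas_qt hb))).aestronglyMeasurable
  have hprod : ∫ u, (qt (poisCdf a) u : ℝ) * (qt (poisCdf b) u : ℝ) ∂unif
      = ∑' p : ℕ × ℕ, min (1 - poisCdf a p.1) (1 - poisCdf b p.2) := by
    rw [integral_eq_lintegral_of_nonneg_ae
      (Filter.Eventually.of_forall fun u => by positivity) hmeas]
    have : ∀ u : ℝ, ENNReal.ofReal ((qt (poisCdf a) u : ℝ) * (qt (poisCdf b) u : ℝ))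
        = (qt (poisCdf a) u : ℝ≥0∞) * (qt (poisCdf b) u : ℝ≥0∞) := by
      intro u
      rw [ENNReal.ofReal_mul (by positivity)]
      simp
    simp_rw [this]
    rw [lintegral_qt_mul ha hb, ENNReal.tsum_toReal_eq (fun p => ENNReal.ofReal_ne_top)]
    refine tsum_congr fun p => ?_
    rw [ENNReal.toReal_ofReal]
    · rw [min_sub_sub_left]
    · have h1 := cdf_le_one ha p.1
      have h2 := cdf_le_one hb p.2
      simp only [sub_nonneg, max_le_iff]
      exact ⟨h1, h2⟩
  rw [hprod, integral_qt ha, integral_qt hb]
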